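/- Let X₁ and X₂ be independent nonnegative random variables. Suppose there exist θ > 0 and a function φ : ℝ≥0 → ℝ≥0 with φ(x) → ∞ and φ(x)/x → 0 as x → ∞, such that P(X₁ > x) = O(x^{-θ}), P(X₂ > φ(x)) = O(x^{-θ}), and E[X₂^θ] < ∞. Then P(X₁·X₂ > x) = O(x^{-θ}) as x → ∞. -/

import Mathlib

open MeasureTheory ProbabilityTheory Filter Asymptotics

/-- If `P(X₁ > x) = O(x^{-θ})`, `P(X₂ > φ(x)) = O(x^{-θ})` for a function `φ` with
`φ(x) → ∞`, `φ(x)/x → 0`, and `E[X₂^θ] < ∞`, then `P(X₁X₂ > x) = O(x^{-θ})`. -/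
theorem stmt7 {Ω : Type*} [MeasureSpace Ω] [IsProbabilityMeasure (ℙ : Measure Ω)]
    (X₁ X₂ : Ω → ℝ) (hm₁ : Measurable X₁) (hm₂ : Measurable X₂)
    (h₁ : ∀ ω, 0 ≤ X₁ ω) (h₂ : ∀ ω, 0 ≤ X₂ ω)
    (hindep : IndepFun X₁ X₂ ℙ)
    (θ : ℝ) (hθ : 0 < θ)
    (φ : ℝ → ℝ) (hφ0 : ∀ x, 0 ≤ φ x)
    (hphitop : Tendsto φ atTop atTop)
    (hφo : Tendsto (fun x => φ x / x) atTop (nhds 0))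
    (hO₁ : (fun x : ℝ => (ℙ {ω | X₁ ω > x}).toReal) =O[atTop] fun x : ℝ => x ^ (-θ))
    (hO₂ : (fun x : ℝ => (ℙ {ω | X₂ ω > φ x}).toReal) =O[atTop] fun x : ℝ => x ^ (-θ))
    (hmom : ∫⁻ ω, ENNReal.ofReal (X₂ ω ^ θ) < ⊤) :
    (fun x : ℝ => (ℙ {ω | X₁ ω * X₂ ω > x}).toReal) =O[atTop] fun x : ℝ => x ^ (-θ) := by
  -- extract eventual tail bounds
  obtain ⟨c₁, hc₁⟩ := hO₁.bound
  obtain ⟨c₂, hc₂⟩ := hO₂.bound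
  obtain ⟨a₁, ha₁⟩ := eventually_atTop.mp hc₁
  obtain ⟨a₂, ha₂⟩ := eventually_atTop.mp hc₂
  set C₁ : ℝ := max c₁ 0 with hC₁def
  set C₂ : ℝ := max c₂ 0 with hC₂def
  have hC₁0 : 0 ≤ C₁ := le_max_right _ _
  have hC₂0 : 0 ≤ C₂ := le_max_right _ _
  set a : ℝ := max a₁ 1 with hadef
  have ha0 : (0:ℝ) < a := lt_of_lt_of_le one_pos (le_max_right _ _)
  -- clean tail bound for X₁
  have hb₁ : ∀ y : ℝ, a ≤ y → (ℙ {ω | X₁ ω > y}).toReal ≤ C₁ * y ^ (-θ) := by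
    intro y hy
    have hy1 : (1:ℝ) ≤ y := le_trans (le_max_right _ _) hy
    have hy0 : (0:ℝ) < y := lt_of_lt_of_le one_pos hy1
    have := ha₁ y (le_trans (le_max_left _ _) hy)
    rw [Real.norm_eq_abs, Real.norm_eq_abs, abs_of_nonneg ENNReal.toReal_nonneg,
      abs_of_pos (Real.rpow_pos_of_pos hy0 _)] at this
    calc (ℙ {ω | X₁ ω > y}).toReal ≤ c₁ * y ^ (-θ) := this
      _ ≤ C₁ * y ^ (-θ) := by
          have := Real.rpow_pos_of_pos hy0 (-θ)
          nlinarith [le_max_left c₁ (0:ℝ)]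
  -- moment
  set M : ℝ := (∫⁻ ω, ENNReal.ofReal (X₂ ω ^ θ)).toReal with hMdef
  have hM0 : 0 ≤ M := ENNReal.toReal_nonneg
  have hMeq : (∫⁻ ω, ENNReal.ofReal (X₂ ω ^ θ)) = ENNReal.ofReal M := by
    rw [hMdef, ENNReal.ofReal_toReal hmom.ne]
  -- eventual smallness of φ x / x
  have hsmall : ∀ᶠ x : ℝ in atTop, φ x / x < 1 / a :=
    hφo.eventually (gt_mem_nhds (by positivity))
  obtain ⟨a₃, ha₃⟩ := eventually_atTop.mp hsmall
  set K : ℝ := C₁ * M + C₂ with hKdef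
  have hK0 : 0 ≤ K := by positivity
  rw [isBigO_iff]
  refine ⟨K, eventually_atTop.mpr ⟨max (max a₂ a₃) 1, fun x hx => ?_⟩⟩
  have hx1 : (1:ℝ) ≤ x := le_trans (le_max_right _ _) hx
  have hx0 : (0:ℝ) < x := lt_of_lt_of_le one_pos hx1
  have hx2 : a₂ ≤ x := le_trans (le_trans (le_max_left _ _) (le_max_left _ _)) hx
  have hx3 : a₃ ≤ x := le_trans (le_trans (le_max_right _ _) (le_max_left _ _)) hx
  have hxrpow : (0:ℝ) < x ^ (-θ) := Real.rpow_pos_of_pos hx0 _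
  -- tail bound for X₂ at this x
  have hb₂ : (ℙ {ω | X₂ ω > φ x}).toReal ≤ C₂ * x ^ (-θ) := by
    have := ha₂ x hx2
    rw [Real.norm_eq_abs, Real.norm_eq_abs, abs_of_nonneg ENNReal.toReal_nonneg,
      abs_of_pos hxrpow] at this
    nlinarith [le_max_left c₂ (0:ℝ)]
  -- key claim in ENNReal
  have key : ℙ {ω | X₁ ω * X₂ ω > x} ≤ ENNReal.ofReal (K * x ^ (-θ)) := by
    have hsub : {ω | X₁ ω * X₂ ω > x} ⊆
        {ω | x < X₁ ω * X₂ ω ∧ X₂ ω ≤ φ x} ∪ {ω | X₂ ω > φ x} := by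
      intro ω hω
      by_cases h : X₂ ω ≤ φ x
      · exact Or.inl ⟨hω, h⟩
      · exact Or.inr (lt_of_not_ge h)
    have step1 : ℙ {ω | X₁ ω * X₂ ω > x} ≤
        ℙ {ω | x < X₁ ω * X₂ ω ∧ X₂ ω ≤ φ x} + ℙ {ω | X₂ ω > φ x} :=
      le_trans (measure_mono hsub) (measure_union_le _ _)
    -- second term
    have t2 : ℙ {ω | X₂ ω > φ x} ≤ ENNReal.ofReal (C₂ * x ^ (-θ)) := by
      rw [← ENNReal.ofReal_toReal (measure_ne_top ℙ _)]
      exact ENNReal.ofReal_le_ofReal hb₂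
    -- first term via product measure
    set μ₁ : Measure ℝ := Measure.map X₁ ℙ with hμ₁
    set μ₂ : Measure ℝ := Measure.map X₂ ℙ with hμ₂
    have hmap : Measure.map (fun ω => (X₂ ω, X₁ ω)) ℙ = μ₂.prod μ₁ :=
      (indepFun_iff_map_prod_eq_prod_map_map hm₂.aemeasurable hm₁.aemeasurable).mp hindep.symm
    set s : Set (ℝ × ℝ) := {p | x < p.2 * p.1 ∧ p.1 ≤ φ x} with hsdef
    have hs : MeasurableSet s :=
      (measurableSet_lt measurable_const (measurable_snd.mul measurable_fst)).inter
        (measurableSet_le measurable_fst measurable_const)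
    have e1 : ℙ {ω | x < X₁ ω * X₂ ω ∧ X₂ ω ≤ φ x} = (μ₂.prod μ₁) s := by
      rw [← hmap, Measure.map_apply (hm₂.prodMk hm₁) hs]
      rfl
    have e2 : (μ₂.prod μ₁) s = ∫⁻ t, μ₁ {u | x < u * t ∧ t ≤ φ x} ∂μ₂ := by
      rw [Measure.prod_apply hs]
      rfl
    -- pointwise bound
    have hpt : ∀ t : ℝ, 0 ≤ t →
        μ₁ {u | x < u * t ∧ t ≤ φ x} ≤ ENNReal.ofReal (C₁ * x ^ (-θ) * t ^ θ) := by
      intro t ht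
      by_cases hcase : 0 < t ∧ t ≤ φ x
      · obtain ⟨ht0, htφ⟩ := hcase
        have hset : {u : ℝ | x < u * t ∧ t ≤ φ x} = Set.Ioi (x / t) := by
          ext u
          simp only [Set.mem_setOf_eq, Set.mem_Ioi]
          constructor
          · rintro ⟨h1, _⟩; exact (div_lt_iff₀ ht0).mpr h1
          · intro h; exact ⟨(div_lt_iff₀ ht0).mp h, htφ⟩
        rw [hset, hμ₁, Measure.map_apply hm₁ measurableSet_Ioi]
        have hya : a ≤ x / t := by
          have hs3 := ha₃ x hx3
          rw [div_lt_div_iff₀ hx0 ha0] at hs3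
          rw [le_div_iff₀ ht0]
          nlinarith [mul_le_mul_of_nonneg_left htφ ha0.le]
        have hb := hb₁ (x / t) hya
        have hmeq : ℙ (X₁ ⁻¹' Set.Ioi (x / t)) = ℙ {ω | X₁ ω > x / t} := rfl
        rw [hmeq, ← ENNReal.ofReal_toReal (measure_ne_top ℙ _)]
        refine ENNReal.ofReal_le_ofReal (le_trans hb (le_of_eq ?_))
        have hxt0 : (0:ℝ) < x / t := div_pos hx0 ht0
        rw [Real.div_rpow hx0.le ht0.le, div_eq_mul_inv, ← Real.rpow_neg ht0.le, neg_neg,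
          mul_assoc]
      · have hset : {u : ℝ | x < u * t ∧ t ≤ φ x} = ∅ := by
          ext u
          simp only [Set.mem_setOf_eq, Set.mem_empty_iff_false, iff_false, not_and]
          intro h1 h2
          rcases eq_or_lt_of_le ht with h | h
          · rw [← h, mul_zero] at h1; linarith
          · exact hcase ⟨h, h2⟩
        rw [hset]
        simp
    -- nonnegativity a.e. under μ₂
    have hae : ∀ᵐ t ∂μ₂, 0 ≤ t := by
      rw [hμ₂]
      exact (ae_map_iff hm₂.aemeasurable measurableSet_Ici).mpr (ae_of_all _ h₂)
    have t1 : ℙ {ω | x < X₁ ω * X₂ ω ∧ X₂ ω ≤ φ x} ≤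
        ENNReal.ofReal (C₁ * M * x ^ (-θ)) := by
      rw [e1, e2]
      have step : (∫⁻ t, μ₁ {u | x < u * t ∧ t ≤ φ x} ∂μ₂) ≤
          ∫⁻ t, ENNReal.ofReal (C₁ * x ^ (-θ)) * ENNReal.ofReal (t ^ θ) ∂μ₂ := by
        refine lintegral_mono_ae (hae.mono fun t ht => ?_)
        refine le_trans (hpt t ht) (le_of_eq ?_)
        rw [← ENNReal.ofReal_mul (by positivity)]
      refine le_trans step (le_of_eq ?_)
      have hmeas : Measurable fun t : ℝ => ENNReal.ofReal (t ^ θ) :=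
        ENNReal.measurable_ofReal.comp ((measurable_id (α := ℝ)).pow measurable_const)
      rw [lintegral_const_mul _ hmeas, hμ₂,
        lintegral_map hmeas hm₂, hMeq, ← ENNReal.ofReal_mul (by positivity)]
      ring_nf
    calc ℙ {ω | X₁ ω * X₂ ω > x}
        ≤ ℙ {ω | x < X₁ ω * X₂ ω ∧ X₂ ω ≤ φ x} + ℙ {ω | X₂ ω > φ x} := step1
      _ ≤ ENNReal.ofReal (C₁ * M * x ^ (-θ)) + ENNReal.ofReal (C₂ * x ^ (-θ)) :=
          add_le_add t1 t2
      _ = ENNReal.ofReal (K * x ^ (-θ)) := by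
          rw [← ENNReal.ofReal_add (by positivity) (by positivity)]
          congr 1; rw [hKdef]; ring
  -- finish
  rw [Real.norm_eq_abs, Real.norm_eq_abs, abs_of_nonneg ENNReal.toReal_nonneg,
    abs_of_pos hxrpow]
  calc (ℙ {ω | X₁ ω * X₂ ω > x}).toReal
      ≤ (ENNReal.ofReal (K * x ^ (-θ))).toReal :=
        ENNReal.toReal_mono ENNReal.ofReal_ne_top key
    _ = K * x ^ (-θ) := ENNReal.toReal_ofReal (by positivity)
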